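/- Let d ∈ (0,2) and let ε be any real number with 1/2 + d/4 < ε < 1. Then there exist a constant C > 0 and N₀ such that for all N ≥ N₀, the number of integers m with 1 ≤ m ≤ N for which there exists a finite simple graph G (not necessarily connected) with average degree at most d and i(G) = m is at most C·N^{ε}. -/

import Mathlib

set_option linter.unusedSectionVars false
set_option linter.unusedVariables false
set_option maxHeartbeats 1000000

/-- The number of independent sets of a simple graph `G`
(including the empty set). -/
noncomputable def numIndep {V : Type*} (G : SimpleGraph V) : ℕ :=
  Nat.card {s : Set V // ∀ x ∈ s, ∀ y ∈ s, ¬ G.Adj x y}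

namespace IUB
open SimpleGraph

variable {V : Type*} [Fintype V]

/-- independence predicate -/
def Ind (G : SimpleGraph V) (s : Set V) : Prop := ∀ x ∈ s, ∀ y ∈ s, ¬ G.Adj x y

/-- number of independent sets inside `W` -/
noncomputable def NI (G : SimpleGraph V) (W : Set V) : ℕ :=
  Nat.card {s : Set V // s ⊆ W ∧ Ind G s}

/-- number of edges inside `W` -/
noncomputable def EC (G : SimpleGraph V) (W : Set V) : ℕ :=
  {e : Sym2 V | e ∈ G.edgeSet ∧ ∀ v ∈ e, v ∈ W}.ncard

lemma Ind.mono {G : SimpleGraph V} {s t : Set V} (h : Ind G t) (hst : s ⊆ t) : Ind G s :=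
  fun x hx y hy => h x (hst hx) y (hst hy)

lemma Ind.empty (G : SimpleGraph V) : Ind G (∅ : Set V) := by
  intro x hx; simp at hx

lemma NI_univ (G : SimpleGraph V) : NI G Set.univ = numIndep G := by
  apply Nat.card_congr
  exact Equiv.subtypeEquivRight (fun s => by simp [Ind])

lemma one_le_NI (G : SimpleGraph V) (W : Set V) : 1 ≤ NI G W := by
  have : Nonempty {s : Set V // s ⊆ W ∧ Ind G s} := ⟨⟨∅, by simp, Ind.empty G⟩⟩
  exact Nat.card_pos

lemma NI_split (G : SimpleGraph V) {W₁ W₂ : Set V} (hd : Disjoint W₁ W₂)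
    (hcross : ∀ x ∈ W₁, ∀ y ∈ W₂, ¬ G.Adj x y) :
    NI G (W₁ ∪ W₂) = NI G W₁ * NI G W₂ := by
  unfold NI
  rw [← Nat.card_prod]
  apply Nat.card_congr
  refine
    { toFun := fun s => (⟨s.1 ∩ W₁, Set.inter_subset_right, s.2.2.mono Set.inter_subset_left⟩,
        ⟨s.1 ∩ W₂, Set.inter_subset_right, s.2.2.mono Set.inter_subset_left⟩),
      invFun := fun p => ⟨p.1.1 ∪ p.2.1, Set.union_subset
          (p.1.2.1.trans Set.subset_union_left) (p.2.2.1.trans Set.subset_union_right), ?_⟩,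
      left_inv := ?_, right_inv := ?_ }
  · -- union of the two independent sets is independent
    rintro x hx y hy hadj
    rcases hx with hx | hx
    · rcases hy with hy | hy
      · exact p.1.2.2 x hx y hy hadj
      · exact hcross x (p.1.2.1 hx) y (p.2.2.1 hy) hadj
    · rcases hy with hy | hy
      · exact hcross y (p.1.2.1 hy) x (p.2.2.1 hx) hadj.symm
      · exact p.2.2.2 x hx y hy hadj
  · rintro ⟨s, hsub, hind⟩
    ext x
    simp only [Set.mem_union, Set.mem_inter_iff]
    constructor
    · rintro (⟨h, _⟩ | ⟨h, _⟩) <;> exact h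
    · intro hx
      rcases hsub hx with h | h
      · exact Or.inl ⟨hx, h⟩
      · exact Or.inr ⟨hx, h⟩
  · rintro ⟨⟨s₁, hs₁, hi₁⟩, ⟨s₂, hs₂, hi₂⟩⟩
    have h1 : (s₁ ∪ s₂) ∩ W₁ = s₁ := by
      apply Set.Subset.antisymm
      · rintro x ⟨hx | hx, hxW⟩
        · exact hx
        · exact absurd (hd.le_bot ⟨hxW, hs₂ hx⟩) (by simp)
      · intro x hx; exact ⟨Or.inl hx, hs₁ hx⟩
    have h2 : (s₁ ∪ s₂) ∩ W₂ = s₂ := by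
      apply Set.Subset.antisymm
      · rintro x ⟨hx | hx, hxW⟩
        · exact absurd (hd.le_bot ⟨hs₁ hx, hxW⟩) (by simp)
        · exact hx
      · intro x hx; exact ⟨Or.inr hx, hs₂ hx⟩
    simp only [h1, h2]

end IUB

namespace IUB2
open SimpleGraph IUB

variable {V : Type*} [Fintype V]

lemma card_set_eq (α : Type*) [Fintype α] : Nat.card (Set α) = 2 ^ Nat.card α := by
  simp [Nat.card_eq_fintype_card]

lemma NI_le_two_pow (G : SimpleGraph V) (W : Set V) : NI G W ≤ 2 ^ W.ncard := by
  classical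
  rw [← Nat.card_coe_set_eq, ← card_set_eq]
  apply Nat.card_le_card_of_injective
    (f := fun s : {s : Set V // s ⊆ W ∧ Ind G s} => {x : ↥W | ↑x ∈ s.1})
  rintro ⟨s, hs, _⟩ ⟨t, ht, _⟩ h
  ext x
  simp only [Set.ext_iff, Set.mem_setOf_eq, Subtype.forall] at h
  constructor
  · intro hx; exact (h x (hs hx)).1 hx
  · intro hx; exact (h x (ht hx)).2 hx

lemma two_pow_le_NI (G : SimpleGraph V) {W I : Set V} (hIW : I ⊆ W) (hind : Ind G I) :
    2 ^ I.ncard ≤ NI G W := by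
  classical
  rw [← Nat.card_coe_set_eq, ← card_set_eq]
  apply Nat.card_le_card_of_injective
    (f := fun t : Set ↥I => (⟨Subtype.val '' t, by
      rintro x ⟨y, _, rfl⟩; exact hIW y.2,
      hind.mono (by rintro x ⟨y, _, rfl⟩; exact y.2)⟩ :
      {s : Set V // s ⊆ W ∧ Ind G s}))
  intro t t' h
  simp only [Subtype.mk.injEq] at h
  exact Set.image_injective.mpr Subtype.val_injective h

variable [LinearOrder V]

lemma diff_le_EC (G : SimpleGraph V) (W : Set V) :
    (W \ {v ∈ W | ∀ u ∈ W, G.Adj v u → u < v}).ncard ≤ EC G W := by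
  classical
  set D : Set V := W \ {v ∈ W | ∀ u ∈ W, G.Adj v u → u < v} with hD
  rw [← Nat.card_coe_set_eq]
  unfold EC
  rw [← Nat.card_coe_set_eq]
  have hex : ∀ v : ↥D, ∃ u, u ∈ W ∧ G.Adj ↑v u ∧ ¬ u < ↑v := by
    rintro ⟨v, hvW, hv⟩
    simp only [Set.mem_setOf_eq, hvW, true_and, not_forall] at hv
    obtain ⟨u, hu1, hu2, hu3⟩ := hv
    exact ⟨u, hu1, hu2, hu3⟩
  choose u hu1 hu2 hu3 using hex
  have hvu : ∀ v : ↥D, (v:V) < u v := fun v =>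
    lt_of_le_of_ne (not_lt.mp (hu3 v)) (G.ne_of_adj (hu2 v))
  have hDW : D ⊆ W := Set.diff_subset
  apply Nat.card_le_card_of_injective
    (f := fun v : ↥D => (⟨s(↑v, u v), G.mem_edgeSet.2 (hu2 v), by
      intro w hw
      rcases Sym2.mem_iff.mp hw with rfl | rfl
      · exact hDW v.2
      · exact hu1 v⟩ : {e : Sym2 V // e ∈ G.edgeSet ∧ ∀ v ∈ e, v ∈ W}))
  intro v v' h
  simp only [Subtype.mk.injEq, Sym2.eq_iff] at h
  rcases h with ⟨h1, _⟩ | ⟨h1, h2⟩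
  · exact Subtype.ext h1
  · exfalso
    have hv1 : (v:V) < ↑v' := h2 ▸ hvu v
    have hv2 : (v':V) < ↑v := h1 ▸ hvu v'
    exact lt_irrefl _ (lt_trans hv1 hv2)

lemma two_pow_ncard_le_NI_mul (G : SimpleGraph V) (W : Set V) :
    2 ^ W.ncard ≤ NI G W * 2 ^ EC G W := by
  classical
  set I : Set V := {v ∈ W | ∀ u ∈ W, G.Adj v u → u < v} with hI
  have hIW : I ⊆ W := fun v hv => hv.1
  have hind : Ind G I := by
    rintro x ⟨hxW, hx⟩ y ⟨hyW, hy⟩ hadj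
    exact lt_irrefl x (lt_trans (hy x hxW hadj.symm) (hx y hyW hadj))
  have hsplit : W.ncard ≤ I.ncard + (W \ I).ncard := by
    nth_rewrite 1 [← Set.union_diff_cancel hIW]
    exact Set.ncard_union_le _ _
  calc 2 ^ W.ncard ≤ 2 ^ (I.ncard + (W \ I).ncard) := Nat.pow_le_pow_right (by norm_num) hsplit
    _ = 2 ^ I.ncard * 2 ^ (W \ I).ncard := pow_add 2 _ _
    _ ≤ NI G W * 2 ^ EC G W :=
        Nat.mul_le_mul (two_pow_le_NI G hIW hind)
          (Nat.pow_le_pow_right (by norm_num) (diff_le_EC G W))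

lemma EC_univ (G : SimpleGraph V) : EC G Set.univ = Nat.card G.edgeSet := by
  unfold EC
  rw [← Nat.card_coe_set_eq]
  congr 1
  simp

lemma EC_split (G : SimpleGraph V) {W₁ W₂ : Set V} (hd : Disjoint W₁ W₂)
    (hcross : ∀ x ∈ W₁, ∀ y ∈ W₂, ¬ G.Adj x y) :
    EC G (W₁ ∪ W₂) = EC G W₁ + EC G W₂ := by
  classical
  unfold EC
  have hset : {e : Sym2 V | e ∈ G.edgeSet ∧ ∀ v ∈ e, v ∈ W₁ ∪ W₂} =
      {e : Sym2 V | e ∈ G.edgeSet ∧ ∀ v ∈ e, v ∈ W₁} ∪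
      {e : Sym2 V | e ∈ G.edgeSet ∧ ∀ v ∈ e, v ∈ W₂} := by
    ext e
    induction e with
    | _ x y =>
      simp only [Set.mem_setOf_eq, Set.mem_union, Sym2.mem_iff]
      constructor
      · rintro ⟨he, hmem⟩
        have hadj : G.Adj x y := G.mem_edgeSet.1 he
        have hx := hmem x (Or.inl rfl)
        have hy := hmem y (Or.inr rfl)
        rcases hx with hx | hx
        · rcases hy with hy | hy
          · exact Or.inl ⟨he, by rintro v (rfl | rfl) <;> assumption⟩
          · exact absurd hadj (hcross x hx y hy)
        · rcases hy with hy | hy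
          · exact absurd hadj.symm (hcross y hy x hx)
          · exact Or.inr ⟨he, by rintro v (rfl | rfl) <;> assumption⟩
      · rintro (⟨he, hmem⟩ | ⟨he, hmem⟩)
        · exact ⟨he, fun v hv => Or.inl (hmem v hv)⟩
        · exact ⟨he, fun v hv => Or.inr (hmem v hv)⟩
  rw [hset]
  apply Set.ncard_union_eq
  · rw [Set.disjoint_left]
    rintro e ⟨he, h1⟩ ⟨_, h2⟩
    induction e with
    | _ x y =>
      have hx1 := h1 x (Sym2.mem_mk_left x y)
      have hx2 := h2 x (Sym2.mem_mk_left x y)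
      exact Set.disjoint_left.mp hd hx1 hx2
  · exact Set.toFinite _
  · exact Set.toFinite _

/-- the reachability class of `v` -/
def RS (G : SimpleGraph V) (v : V) : Set V := {u | G.Reachable v u}

lemma mem_RS_self (G : SimpleGraph V) (v : V) : v ∈ RS G v := Reachable.refl v

lemma RS_eq_of_mem {G : SimpleGraph V} {u v : V} (h : u ∈ RS G v) : RS G u = RS G v := by
  ext w
  exact ⟨fun huw => h.trans huw, fun hvw => h.symm.trans hvw⟩

lemma adj_mem_RS {G : SimpleGraph V} {u v : V} (h : G.Adj v u) : u ∈ RS G v := h.reachable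

/-- canonical representative of the reachability class -/
noncomputable def rep (G : SimpleGraph V) (v : V) : V :=
  ((Set.toFinite (RS G v)).toFinset).min' ⟨v, by
    rw [Set.Finite.mem_toFinset]; exact mem_RS_self G v⟩

lemma rep_mem (G : SimpleGraph V) (v : V) : rep G v ∈ RS G v := by
  have := Finset.min'_mem ((Set.toFinite (RS G v)).toFinset) ⟨v, by
    rw [Set.Finite.mem_toFinset]; exact mem_RS_self G v⟩
  rwa [Set.Finite.mem_toFinset] at this

lemma rep_eq_of_mem {G : SimpleGraph V} {u v : V} (h : u ∈ RS G v) : rep G u = rep G v := by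
  unfold rep
  congr 1
  ext x
  rw [Set.Finite.mem_toFinset, Set.Finite.mem_toFinset, RS_eq_of_mem h]

lemma reachable_rep (G : SimpleGraph V) (v : V) : G.Reachable v (rep G v) := rep_mem G v

lemma large_part_edges (G : SimpleGraph V) (A : ℕ) (T : Set V)
    (hT : T = {v : V | A < (RS G v).ncard}) :
    A * T.ncard ≤ (A + 1) * EC G T := by
  classical
  subst hT
  set T : Set V := {v : V | A < (RS G v).ncard} with hTdef
  have hmemT : ∀ {u v : V}, u ∈ RS G v → v ∈ T → u ∈ T := by
    intro u v hu hv
    have : A < (RS G v).ncard := hv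
    show A < (RS G u).ncard
    rwa [RS_eq_of_mem hu]
  set R : Set V := {v ∈ T | rep G v = v} with hR
  have hRT : R ⊆ T := fun v hv => hv.1
  have hrepR : ∀ v ∈ T, rep G v ∈ R := by
    intro v hv
    exact ⟨hmemT (rep_mem G v) hv, rep_eq_of_mem (rep_mem G v)⟩
  -- Step 1 : (A+1) * R.ncard ≤ T.ncard
  have step1 : (A + 1) * R.ncard ≤ T.ncard := by
    have hTf := Set.toFinite T
    have hRf := Set.toFinite R
    rw [Set.ncard_eq_toFinset_card T hTf, Set.ncard_eq_toFinset_card R hRf]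
    have hmaps : ∀ v ∈ hTf.toFinset, rep G v ∈ hRf.toFinset := by
      intro v hv
      rw [Set.Finite.mem_toFinset] at hv ⊢
      exact hrepR v hv
    rw [Finset.card_eq_sum_card_fiberwise hmaps]
    have hcalc : hRf.toFinset.card • (A + 1) ≤
        ∑ b ∈ hRf.toFinset, (hTf.toFinset.filter (fun v => rep G v = b)).card := by
      apply Finset.card_nsmul_le_sum
      intro b hb
      rw [Set.Finite.mem_toFinset] at hb
      have hbT : b ∈ T := hRT hb
      have hsub : (Set.toFinite (RS G b)).toFinset ⊆
          hTf.toFinset.filter (fun v => rep G v = b) := by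
        intro u hu
        rw [Set.Finite.mem_toFinset] at hu
        rw [Finset.mem_filter, Set.Finite.mem_toFinset]
        exact ⟨hmemT hu hbT, by rw [rep_eq_of_mem hu]; exact hb.2⟩
      calc A + 1 ≤ (RS G b).ncard := hbT
        _ = (Set.toFinite (RS G b)).toFinset.card := Set.ncard_eq_toFinset_card _ _
        _ ≤ _ := Finset.card_le_card hsub
    calc (A + 1) * hRf.toFinset.card = hRf.toFinset.card • (A + 1) := by
          rw [smul_eq_mul, mul_comm]
      _ ≤ _ := hcalc
  -- Step 2
  have step2 : (T \ R).ncard ≤ EC G T := by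
    have hstep : ∀ v : ↥(T \ R), ∃ u, G.Adj ↑v u ∧
        G.dist u (rep G ↑v) < G.dist ↑v (rep G ↑v) := by
      rintro ⟨v, hvT, hvR⟩
      show ∃ u, G.Adj v u ∧ G.dist u (rep G v) < G.dist v (rep G v)
      have hne : v ≠ rep G v := by
        intro h
        exact hvR ⟨hvT, h.symm⟩
      obtain ⟨p, hp⟩ := (reachable_rep G v).exists_walk_length_eq_dist
      obtain ⟨u, hadj, q, rfl⟩ := SimpleGraph.Walk.exists_eq_cons_of_ne hne p
      refine ⟨u, hadj, ?_⟩
      have h1 : G.dist u (rep G v) ≤ q.length := SimpleGraph.dist_le q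
      have h2 : q.length + 1 = G.dist v (rep G v) := by
        simpa using hp
      omega
    choose nxt hadj hdist using hstep
    have hnxtT : ∀ v : ↥(T \ R), nxt v ∈ T :=
      fun v => hmemT (adj_mem_RS (hadj v)) v.2.1
    rw [← Nat.card_coe_set_eq]
    unfold EC
    rw [← Nat.card_coe_set_eq]
    apply Nat.card_le_card_of_injective
      (f := fun v : ↥(T \ R) => (⟨s(↑v, nxt v), G.mem_edgeSet.2 (hadj v), by
        intro w hw
        rcases Sym2.mem_iff.mp hw with rfl | rfl
        · exact v.2.1
        · exact hnxtT v⟩ : {e : Sym2 V // e ∈ G.edgeSet ∧ ∀ x ∈ e, x ∈ T}))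
    intro v v' h
    simp only [Subtype.mk.injEq, Sym2.eq_iff] at h
    rcases h with ⟨h1, _⟩ | ⟨h1, h2⟩
    · exact Subtype.ext h1
    · exfalso
      have hadjvv : G.Adj ↑v ↑v' := by
        have := hadj v
        rwa [h2] at this
      have hrepeq : rep G ↑v' = rep G ↑v := rep_eq_of_mem (adj_mem_RS hadjvv)
      have d1 := hdist v
      have d2 := hdist v'
      rw [h2] at d1
      rw [← h1, hrepeq] at d2
      omega
  have step3 : T.ncard ≤ (T \ R).ncard + R.ncard := by
    nth_rewrite 1 [← Set.diff_union_of_subset hRT]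
    exact Set.ncard_union_le _ _
  have c1 : (A + 1) * T.ncard ≤ (A + 1) * EC G T + T.ncard := by
    calc (A + 1) * T.ncard ≤ (A + 1) * ((T \ R).ncard + R.ncard) :=
          Nat.mul_le_mul_left _ step3
      _ = (A + 1) * (T \ R).ncard + (A + 1) * R.ncard := by ring
      _ ≤ (A + 1) * EC G T + T.ncard :=
          Nat.add_le_add (Nat.mul_le_mul_left _ step2) step1
  have : (A + 1) * T.ncard = A * T.ncard + T.ncard := by ring
  omega

lemma NI_empty (G : SimpleGraph V) : NI G (∅ : Set V) = 1 := by
  unfold NI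
  rw [Nat.card_eq_one_iff_unique]
  constructor
  · constructor
    rintro ⟨s, hs, _⟩ ⟨t, ht, _⟩
    have hs' : s = ∅ := Set.subset_empty_iff.mp hs
    have ht' : t = ∅ := Set.subset_empty_iff.mp ht
    subst hs'; subst ht'; rfl
  · exact ⟨⟨∅, by simp, Ind.empty G⟩⟩

lemma two_le_NI (G : SimpleGraph V) {W : Set V} {v : V} (hv : v ∈ W) : 2 ≤ NI G W := by
  have h := two_pow_le_NI G (I := {v}) (W := W) (by simpa using hv)
    (fun x hx y hy => by
      rw [Set.mem_singleton_iff] at hx hy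
      subst hx; subst hy
      exact fun had => G.irrefl had)
  simpa using h

lemma numIndep_comap {α β : Type*} (e : α ≃ β) (G : SimpleGraph β) :
    numIndep (G.comap e) = numIndep G := by
  apply Nat.card_congr
  refine Equiv.subtypeEquiv (Equiv.Set.congr e) ?_
  intro s
  constructor
  · rintro h x hx y hy hadj
    rw [Equiv.Set.congr_apply] at hx hy
    obtain ⟨a, ha, rfl⟩ := hx
    obtain ⟨b, hb, rfl⟩ := hy
    exact h a ha b hb hadj
  · intro h x hx y hy hadj
    refine h (e x) ?_ (e y) ?_ hadj
    · rw [Equiv.Set.congr_apply]; exact ⟨x, hx, rfl⟩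
    · rw [Equiv.Set.congr_apply]; exact ⟨y, hy, rfl⟩

lemma NI_eq_induce (G : SimpleGraph V) (W : Set V) :
    NI G W = numIndep (G.induce W) := by
  apply Nat.card_congr
  refine
    { toFun := fun s => ⟨Subtype.val ⁻¹' s.1, ?_⟩,
      invFun := fun t => ⟨Subtype.val '' t.1, ?_, ?_⟩,
      left_inv := ?_, right_inv := ?_ }
  · intro x hx y hy hadj
    exact s.2.2 ↑x hx ↑y hy hadj
  · rintro z ⟨a, _, rfl⟩
    exact a.2
  · rintro z ⟨a, ha, rfl⟩ w ⟨b, hb, rfl⟩ hadj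
    exact t.2 a ha b hb hadj
  · rintro ⟨s, hsW, hind⟩
    apply Subtype.ext
    simp only
    rw [Subtype.image_preimage_coe]
    exact Set.inter_eq_self_of_subset_right hsW
  · rintro ⟨t, hind⟩
    apply Subtype.ext
    simp only
    exact Set.preimage_image_eq t Subtype.val_injective

end IUB2

namespace IUB3
open SimpleGraph IUB IUB2

/-- the possible numbers of independent sets of graphs on at most `A` vertices -/
def SV (A : ℕ) : Set ℕ :=
  {t | 2 ≤ t ∧ ∃ a : ℕ, a ≤ A ∧ ∃ H : SimpleGraph (Fin a), numIndep H = t}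

lemma numIndep_le_two_pow {a : ℕ} (H : SimpleGraph (Fin a)) : numIndep H ≤ 2 ^ a := by
  have h := NI_le_two_pow H Set.univ
  rw [NI_univ] at h
  rwa [Set.ncard_univ, Nat.card_eq_fintype_card, Fintype.card_fin] at h

lemma SV_subset (A : ℕ) : SV A ⊆ Set.Icc 2 (2 ^ A) := by
  rintro t ⟨ht2, a, haA, H, rfl⟩
  exact ⟨ht2, (numIndep_le_two_pow H).trans (Nat.pow_le_pow_right (by norm_num) haA)⟩

lemma SV_finite (A : ℕ) : (SV A).Finite :=
  (Set.finite_Icc 2 (2 ^ A)).subset (SV_subset A)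

variable {V : Type*} [Fintype V] [LinearOrder V]

lemma NI_small_mem_closure (G : SimpleGraph V) (A : ℕ) (W : Set V)
    (hclosed : ∀ v ∈ W, RS G v ⊆ W)
    (hsmall : ∀ v ∈ W, (RS G v).ncard ≤ A) :
    NI G W ∈ Submonoid.closure (SV A) := by
  classical
  generalize hc : W.ncard = c
  induction c using Nat.strong_induction_on generalizing W with
  | _ c IH =>
    rcases Set.eq_empty_or_nonempty W with rfl | ⟨v, hv⟩
    · rw [NI_empty]
      exact one_mem _
    · set C := RS G v with hC
      have hCW : C ⊆ W := hclosed v hv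
      have hvC : v ∈ C := mem_RS_self G v
      have hCclosed : ∀ x ∈ C, RS G x = C := by
        intro x hx
        rw [hC]
        exact RS_eq_of_mem hx
      have hsplit : NI G W = NI G C * NI G (W \ C) := by
        have hW : C ∪ (W \ C) = W := Set.union_diff_cancel hCW
        calc NI G W = NI G (C ∪ (W \ C)) := by rw [hW]
          _ = NI G C * NI G (W \ C) := by
              apply NI_split G Set.disjoint_sdiff_right
              intro x hx y hy hadj
              exact hy.2 (by rw [← hCclosed x hx]; exact adj_mem_RS hadj)
      -- NI G C is a value of a small graph
      have hmem : NI G C ∈ SV A := by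
        haveI : Fintype ↥C := (Set.toFinite C).fintype
        have ecard : Fintype.card ↥C = C.ncard := by
          rw [← Nat.card_coe_set_eq, Nat.card_eq_fintype_card]
        let e : Fin (C.ncard) ≃ ↥C :=
          (finCongr ecard.symm).trans (Fintype.equivFin ↥C).symm
        refine ⟨two_le_NI G hvC, C.ncard, hsmall v hv,
          (G.induce C).comap e, ?_⟩
        rw [numIndep_comap, ← NI_eq_induce]
      -- inductive step
      have hlt : (W \ C).ncard < c := by
        rw [← hc]
        apply Set.ncard_lt_ncard _ (Set.toFinite W)
        constructor
        · exact Set.diff_subset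
        · intro hsub
          exact (hsub (hCW hvC)).2 hvC
      have hclosed' : ∀ u ∈ W \ C, RS G u ⊆ W \ C := by
        rintro u ⟨huW, huC⟩ w hw
        refine ⟨hclosed u huW hw, fun hwC => ?_⟩
        apply huC
        rw [← hCclosed w hwC]
        exact (RS_eq_of_mem hw).symm ▸ mem_RS_self G u
      have hsmall' : ∀ u ∈ W \ C, (RS G u).ncard ≤ A :=
        fun u hu => hsmall u hu.1
      rw [hsplit]
      exact mul_mem (Submonoid.subset_closure hmem)
        (IH _ hlt (W \ C) hclosed' hsmall' rfl)

end IUB3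

namespace IUB4
open IUB3

lemma products_count (A N : ℕ) (hN : 1 ≤ N) :
    ∃ D : Finset ℕ, (∀ z : ℕ, z ∈ Submonoid.closure (SV A) → z ≤ N → z ∈ D) ∧
      D.card ≤ (Nat.log 2 N + 1) ^ (SV_finite A).toFinset.card := by
  classical
  set SVF : Finset ℕ := (SV_finite A).toFinset with hSVF
  set L : ℕ := Nat.log 2 N with hL
  refine ⟨(SVF.pi (fun _ => Finset.range (L+1))).image
      (fun f => SVF.attach.prod (fun a => (a : ℕ) ^ f a.1 a.2)), ?_, ?_⟩
  · intro z hz hzN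
    obtain ⟨l, hl, hprod⟩ := Submonoid.exists_multiset_of_mem_closure hz
    have hl2 : ∀ y ∈ l, 2 ≤ y := fun y hy => (hl y hy).1
    have hsub : l.toFinset ⊆ SVF := by
      intro x hx
      rw [Set.Finite.mem_toFinset]
      exact hl x (Multiset.mem_toFinset.mp hx)
    have hz_eq : z = ∏ a ∈ SVF, a ^ l.count a := by
      rw [← hprod, Finset.prod_multiset_count]
      apply Finset.prod_subset hsub
      intro x _ hx
      rw [Multiset.count_eq_zero_of_notMem (fun hmem => hx (Multiset.mem_toFinset.mpr hmem))]
      exact pow_zero x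
    have hzpos : 0 < z := by
      rw [hz_eq]
      apply Finset.prod_pos
      intro a ha
      have ha2 : 2 ≤ a := by
        rw [Set.Finite.mem_toFinset] at ha
        exact ha.1
      positivity
    have hcount : ∀ a ∈ SVF, l.count a ≤ L := by
      intro a ha
      have ha2 : 2 ≤ a := by
        rw [Set.Finite.mem_toFinset] at ha
        exact ha.1
      have hfac : a ^ l.count a ≤ z := by
        rw [hz_eq]
        apply Finset.single_le_prod' _ ha
        intro b hb
        have hb2 : 2 ≤ b := by
          rw [Set.Finite.mem_toFinset] at hb
          exact hb.1
        exact Nat.one_le_pow _ _ (by omega)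
      have h2pow : 2 ^ l.count a ≤ N :=
        le_trans (Nat.pow_le_pow_left ha2 _) (hfac.trans hzN)
      exact (Nat.le_log_iff_pow_le (by norm_num) (by omega)).mpr h2pow
    rw [Finset.mem_image]
    refine ⟨fun a _ => l.count a, ?_, ?_⟩
    · rw [Finset.mem_pi]
      intro a ha
      rw [Finset.mem_range]
      exact Nat.lt_succ_of_le (hcount a ha)
    · rw [← Finset.prod_attach SVF (fun a => a ^ l.count a)] at hz_eq
      exact hz_eq.symm
  · apply (Finset.card_image_le).trans
    rw [Finset.card_pi]
    simp [Finset.prod_const]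

end IUB4

namespace IUB5
open SimpleGraph IUB IUB2 IUB3

lemma key (d : ℝ) (hd0 : 0 < d) (hd2 : d < 2) (A : ℕ)
    (hθ : d / 2 ≤ (A:ℝ)/(A+1))
    (m N : ℕ) (hm1 : 1 ≤ m) (hmN : m ≤ N)
    (n : ℕ) (G : SimpleGraph (Fin n))
    (hbudget : (2 * Nat.card G.edgeSet : ℝ) ≤ d * n)
    (hval : numIndep G = m) :
    ∃ p q : ℕ, p * q = m ∧ p ∈ Submonoid.closure (SV A) ∧ 1 ≤ q ∧
      Real.log q * (1 + ((A:ℝ)/(A+1) - d/2)) ≤ Real.log N := by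
  classical
  set S : Set (Fin n) := {v | (RS G v).ncard ≤ A} with hS
  set T : Set (Fin n) := {v | A < (RS G v).ncard} with hT
  have hST : S ∪ T = Set.univ := by
    rw [hS, hT]
    ext v
    simp only [Set.mem_union, Set.mem_setOf_eq, Set.mem_univ, iff_true]
    omega
  have hdisj : Disjoint S T := by
    rw [Set.disjoint_left]
    intro v hvS hvT
    have h1 : (RS G v).ncard ≤ A := hvS
    have h2 : A < (RS G v).ncard := hvT
    omega
  have hcross : ∀ x ∈ S, ∀ y ∈ T, ¬ G.Adj x y := by
    intro x hx y hy hadj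
    have h1 : (RS G x).ncard ≤ A := hx
    have h2 : A < (RS G y).ncard := hy
    rw [RS_eq_of_mem (adj_mem_RS hadj)] at h2
    omega
  have hpq : NI G S * NI G T = m := by
    rw [← NI_split G hdisj hcross, hST, NI_univ, hval]
  have hclosure : NI G S ∈ Submonoid.closure (SV A) := by
    apply NI_small_mem_closure G A S
    · intro v hv u hu
      have h1 : (RS G v).ncard ≤ A := hv
      show (RS G u).ncard ≤ A
      rwa [RS_eq_of_mem hu]
    · intro v hv
      exact hv
  have hEC : EC G S + EC G T = Nat.card G.edgeSet := by
    rw [← EC_split G hdisj hcross, hST, EC_univ]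
  have hncard : S.ncard + T.ncard = n := by
    rw [← Set.ncard_union_eq hdisj (Set.toFinite S) (Set.toFinite T), hST,
      Set.ncard_univ, Nat.card_eq_fintype_card, Fintype.card_fin]
  have F2 : 2 ^ S.ncard ≤ NI G S * 2 ^ EC G S := two_pow_ncard_le_NI_mul G S
  have F3 : NI G T ≤ 2 ^ T.ncard := NI_le_two_pow G T
  have F4 : A * T.ncard ≤ (A + 1) * EC G T := large_part_edges G A T hT
  have hp1 : 1 ≤ NI G S := one_le_NI G S
  have hq1 : 1 ≤ NI G T := one_le_NI G T
  refine ⟨NI G S, NI G T, hpq, hclosure, hq1, ?_⟩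
  -- real arithmetic
  have hppos : (0:ℝ) < (NI G S : ℝ) := by exact_mod_cast hp1
  have hqpos : (0:ℝ) < (NI G T : ℝ) := by exact_mod_cast hq1
  have hlog2 : (0:ℝ) < Real.log 2 := Real.log_pos (by norm_num)
  set ns : ℝ := (S.ncard : ℝ) with hns
  set nl : ℝ := (T.ncard : ℝ) with hnl
  set es : ℝ := (EC G S : ℝ) with hes
  set el : ℝ := (EC G T : ℝ) with hel
  set lp : ℝ := Real.log (NI G S) with hlp
  set lq : ℝ := Real.log (NI G T) with hlq
  have hnl0 : 0 ≤ nl := by positivity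
  have hns0 : 0 ≤ ns := by positivity
  have hF2R : ns * Real.log 2 ≤ lp + es * Real.log 2 := by
    have hcast : ((2:ℝ) ^ S.ncard) ≤ (NI G S : ℝ) * 2 ^ EC G S := by exact_mod_cast F2
    have h := Real.log_le_log (by positivity) hcast
    rw [Real.log_pow, Real.log_mul (by positivity) (by positivity), Real.log_pow] at h
    exact h
  have hF3R : lq ≤ nl * Real.log 2 := by
    have hcast : ((NI G T : ℝ)) ≤ (2:ℝ) ^ T.ncard := by exact_mod_cast F3
    have h := Real.log_le_log hqpos hcast
    rw [Real.log_pow] at h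
    exact h
  have hF4R : (A:ℝ) * nl ≤ ((A:ℝ) + 1) * el := by
    have : ((A * T.ncard : ℕ) : ℝ) ≤ (((A + 1) * EC G T : ℕ) : ℝ) := by exact_mod_cast F4
    push_cast at this
    linarith
  have hbudgetR : 2 * (es + el) ≤ d * (ns + nl) := by
    have h1 : es + el = (Nat.card G.edgeSet : ℝ) := by
      rw [hes, hel]; exact_mod_cast congrArg (Nat.cast : ℕ → ℝ) hEC
    have h2 : ns + nl = (n : ℝ) := by
      rw [hns, hnl]; exact_mod_cast congrArg (Nat.cast : ℕ → ℝ) hncard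
    rw [h1, h2]
    linarith [hbudget]
  -- chain
  have hApos : (0:ℝ) < (A:ℝ) + 1 := by positivity
  have hel_ge : ((A:ℝ)/((A:ℝ)+1)) * nl ≤ el := by
    rw [div_mul_eq_mul_div, div_le_iff₀ hApos]
    nlinarith [hF4R]
  set θ : ℝ := (A:ℝ)/((A:ℝ)+1) - d/2 with hθdef
  have hθ0 : 0 ≤ θ := by
    rw [hθdef]
    linarith
  have hlp_ge : θ * (nl * Real.log 2) ≤ lp := by
    have h1 : es ≤ d * (ns + nl) / 2 - el := by linarith
    have h2 : (ns - es) * Real.log 2 ≤ lp := by nlinarith [hF2R]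
    have h3 : θ * nl ≤ ns - es := by
      have hns2 : 0 ≤ ns * (2 - d) := by
        apply mul_nonneg hns0
        linarith
      have hexp : θ * nl = ((A:ℝ)/((A:ℝ)+1)) * nl - (d/2) * nl := by
        rw [hθdef]; ring
      rw [hexp]
      linarith [hel_ge, h1, hns2]
    have h4 : θ * nl * Real.log 2 ≤ (ns - es) * Real.log 2 :=
      mul_le_mul_of_nonneg_right h3 (le_of_lt hlog2)
    calc θ * (nl * Real.log 2) = θ * nl * Real.log 2 := by ring
      _ ≤ (ns - es) * Real.log 2 := h4
      _ ≤ lp := h2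
  have hlq_le : θ * lq ≤ lp := by
    calc θ * lq ≤ θ * (nl * Real.log 2) := mul_le_mul_of_nonneg_left hF3R hθ0
      _ ≤ lp := hlp_ge
  have hlogm : lp + lq ≤ Real.log N := by
    have hmN' : NI G S * NI G T ≤ N := by rw [hpq]; exact hmN
    have hm : Real.log ((NI G S : ℝ) * (NI G T : ℝ)) ≤ Real.log N := by
      apply Real.log_le_log (by positivity)
      exact_mod_cast hmN'
    rwa [Real.log_mul (ne_of_gt hppos) (ne_of_gt hqpos)] at hm
  calc lq * (1 + θ) = lq + θ * lq := by ring
    _ ≤ lq + lp := by linarith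
    _ ≤ Real.log N := by linarith

end IUB5


/-- `Iavg d` is the set of positive integers of the form `i(G)` for a finite
simple graph `G` (not necessarily connected) of average degree at most `d`,
i.e. with `2|E(G)| ≤ d |V(G)|` (the empty graph has average degree `0`). -/
def Iavg (d : ℝ) : Set ℕ :=
  {m | ∃ (n : ℕ) (G : SimpleGraph (Fin n)),
    (2 * Nat.card G.edgeSet : ℝ) ≤ d * n ∧ numIndep G = m}

/-- For `d ∈ (0,2)` and any `ε` with `1/2 + d/4 < ε < 1`, there are `C > 0` and
`N₀` with: for all `N ≥ N₀`, at most `C ⬝ N^ε` integers in `{1,…,N}` are the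
number of independent sets of a graph with average degree at most `d`. -/
theorem Iavg_upper_bound (d : ℝ) (hd : d ∈ Set.Ioo (0 : ℝ) 2) (ε : ℝ)
    (hε₁ : 1 / 2 + d / 4 < ε) (hε₂ : ε < 1) :
    ∃ C : ℝ, 0 < C ∧ ∃ N₀ : ℕ, ∀ N : ℕ, N₀ ≤ N →
      ((Iavg d ∩ Set.Icc 1 N).ncard : ℝ) ≤ C * (N : ℝ) ^ ε := by
  classical
  open IUB IUB2 IUB3 IUB4 IUB5 in
  obtain ⟨hd0, hd2⟩ := hd
  have hε0 : 0 < ε := by linarith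
  -- choose the cutoff A
  have hε4d : 2 < ε * (4 - d) := by nlinarith
  have hη : 0 < 2 - d/2 - 1/ε := by
    have h1 : 1/ε < 2 - d/2 := by
      rw [div_lt_iff₀ hε0]
      nlinarith
    linarith
  obtain ⟨A, hA⟩ := exists_nat_gt (1 / (2 - d/2 - 1/ε))
  have hA1 : (0:ℝ) < (A:ℝ) + 1 := by positivity
  have hAfrac : d/2 + (1-ε)/ε < (A:ℝ)/((A:ℝ)+1) := by
    have h1 : 1/((A:ℝ)+1) < 2 - d/2 - 1/ε := by
      rw [div_lt_iff₀ hA1]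
      have h2 : 1 / (2 - d/2 - 1/ε) < (A:ℝ) := hA
      rw [div_lt_iff₀ hη] at h2
      nlinarith
    have h3 : (A:ℝ)/((A:ℝ)+1) = 1 - 1/((A:ℝ)+1) := by
      field_simp
      ring
    rw [h3]
    have h4 : (1-ε)/ε = 1/ε - 1 := by
      field_simp
    rw [h4]
    linarith
  obtain ⟨θ, hθdef⟩ : ∃ θ : ℝ, θ = (A:ℝ)/((A:ℝ)+1) - d/2 := ⟨_, rfl⟩
  have hθpos : 0 < θ := by
    have : 0 < (1-ε)/ε := div_pos (by linarith) hε0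
    rw [hθdef]
    linarith
  have hθd : d/2 ≤ (A:ℝ)/((A:ℝ)+1) := by
    have : 0 < (1-ε)/ε := div_pos (by linarith) hε0
    linarith
  obtain ⟨ε₂, hε₂def⟩ : ∃ e : ℝ, e = 1/(1+θ) := ⟨_, rfl⟩
  have h1θ : (0:ℝ) < 1 + θ := by linarith
  have hε₂pos : 0 < ε₂ := by rw [hε₂def]; positivity
  have hε₂lt : ε₂ < ε := by
    rw [hε₂def, div_lt_iff₀ h1θ]
    have : 1/ε < 1 + θ := by
      rw [hθdef]
      have h4 : (1-ε)/ε = 1/ε - 1 := by field_simp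
      linarith [hAfrac, h4]
    calc (1:ℝ) = ε * (1/ε) := by field_simp
      _ < ε * (1+θ) := mul_lt_mul_of_pos_left this hε0
  set K : ℕ := (SV_finite A).toFinset.card with hK
  obtain ⟨δ, hδdef⟩ : ∃ x : ℝ, x = (ε - ε₂)/((K:ℝ)+1) := ⟨_, rfl⟩
  have hδpos : 0 < δ := by
    rw [hδdef]
    have : 0 < ε - ε₂ := by linarith
    positivity
  have hlog2 : (0:ℝ) < Real.log 2 := Real.log_pos (by norm_num)
  refine ⟨(1/(δ * Real.log 2) + 1)^K, by positivity, 1, ?_⟩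
  intro N hN1
  have hNR1 : (1:ℝ) ≤ (N:ℝ) := by exact_mod_cast hN1
  have hNRpos : (0:ℝ) < (N:ℝ) := by linarith
  set L : ℕ := Nat.log 2 N with hL
  obtain ⟨D, hDmem, hDcard⟩ := products_count A N hN1
  set M : ℕ := Nat.floor ((N:ℝ) ^ ε₂) with hM
  -- apply key to every element
  have hkey : ∀ m ∈ Iavg d ∩ Set.Icc 1 N, ∃ pq : ℕ × ℕ, pq.1 * pq.2 = m ∧
      pq.1 ∈ Submonoid.closure (SV A) ∧ 1 ≤ pq.2 ∧
      Real.log pq.2 * (1 + θ) ≤ Real.log N := by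
    rintro m ⟨⟨n, G, hbudget, hval⟩, hm1, hmN⟩
    obtain ⟨p, q, h1, h2, h3, h4⟩ := key d hd0 hd2 A hθd m N hm1 hmN n G hbudget hval
    exact ⟨(p, q), h1, h2, h3, by rw [hθdef]; exact h4⟩
  choose! f hf1 hf2 hf3 hf4 using hkey
  have hinj : Set.InjOn f (Iavg d ∩ Set.Icc 1 N) := by
    intro m hm m' hm' heq
    rw [← hf1 m hm, ← hf1 m' hm', heq]
  have himg : f '' (Iavg d ∩ Set.Icc 1 N) ⊆ ↑(D ×ˢ Finset.Icc 1 M) := by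
    rintro _ ⟨m, hm, rfl⟩
    rw [Finset.mem_coe, Finset.mem_product]
    have hq1 := hf3 m hm
    constructor
    · apply hDmem _ (hf2 m hm)
      have hple : (f m).1 ≤ (f m).1 * (f m).2 := Nat.le_mul_of_pos_right _ (by omega)
      rw [hf1 m hm] at hple
      exact hple.trans hm.2.2
    · rw [Finset.mem_Icc]
      refine ⟨hq1, ?_⟩
      apply Nat.le_floor
      have hqpos : (0:ℝ) < ((f m).2 : ℝ) := by exact_mod_cast hq1
      have hlogq : Real.log ((f m).2) ≤ Real.log N * ε₂ := by
        have h4 := hf4 m hm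
        rw [hε₂def, mul_one_div, le_div_iff₀ h1θ]
        exact h4
      calc ((f m).2 : ℝ) = Real.exp (Real.log ((f m).2)) := (Real.exp_log hqpos).symm
        _ ≤ Real.exp (Real.log N * ε₂) := Real.exp_le_exp.mpr hlogq
        _ = (N:ℝ) ^ ε₂ := (Real.rpow_def_of_pos hNRpos ε₂).symm
  -- count
  have hcount : (Iavg d ∩ Set.Icc 1 N).ncard ≤ D.card * M := by
    have h1 : (Iavg d ∩ Set.Icc 1 N).ncard = (f '' (Iavg d ∩ Set.Icc 1 N)).ncard :=
      (Set.ncard_image_of_injOn hinj).symm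
    have h2 : (f '' (Iavg d ∩ Set.Icc 1 N)).ncard ≤ (D ×ˢ Finset.Icc 1 M).card := by
      rw [← Set.ncard_coe_finset]
      exact Set.ncard_le_ncard himg (Finset.finite_toSet _)
    have h3 : (D ×ˢ Finset.Icc 1 M).card = D.card * M := by
      rw [Finset.card_product, Nat.card_Icc]
      simp
    omega
  -- final real estimate
  have hLlog : (L:ℝ) * Real.log 2 ≤ Real.log N := by
    have h2L : (2:ℕ)^L ≤ N := Nat.pow_log_le_self 2 (by omega)
    have hcast : ((2:ℝ))^L ≤ (N:ℝ) := by exact_mod_cast h2L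
    have := Real.log_le_log (by positivity) hcast
    rwa [Real.log_pow] at this
  have hlogN : Real.log N ≤ (N:ℝ)^δ / δ := by
    have h1 : δ * Real.log N = Real.log ((N:ℝ)^δ) := (Real.log_rpow hNRpos δ).symm
    have h2 : Real.log ((N:ℝ)^δ) ≤ (N:ℝ)^δ - 1 := Real.log_le_sub_one_of_pos (by positivity)
    rw [le_div_iff₀ hδpos, mul_comm]
    nlinarith [h1, h2]
  have hNδ1 : (1:ℝ) ≤ (N:ℝ)^δ := Real.one_le_rpow hNR1 (le_of_lt hδpos)
  have hL1 : ((L:ℝ) + 1) ≤ (N:ℝ)^δ * (1/(δ * Real.log 2) + 1) := by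
    have h1 : (L:ℝ) ≤ Real.log N / Real.log 2 := by
      rw [le_div_iff₀ hlog2]
      exact hLlog
    have h2 : Real.log N / Real.log 2 ≤ (N:ℝ)^δ / (δ * Real.log 2) := by
      rw [div_le_div_iff₀ hlog2 (by positivity)]
      calc Real.log N * (δ * Real.log 2) = (Real.log N * δ) * Real.log 2 := by ring
        _ ≤ ((N:ℝ)^δ / δ * δ) * Real.log 2 := by
            apply mul_le_mul_of_nonneg_right _ (le_of_lt hlog2)
            apply mul_le_mul_of_nonneg_right hlogN (le_of_lt hδpos)
        _ = (N:ℝ)^δ * Real.log 2 := by field_simp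
    have h3 : (N:ℝ)^δ / (δ * Real.log 2) = (N:ℝ)^δ * (1/(δ * Real.log 2)) := by ring
    nlinarith [h1, h2, hNδ1]
  -- assemble
  have hMle : (M:ℝ) ≤ (N:ℝ)^ε₂ := Nat.floor_le (by positivity)
  have hcast : ((Iavg d ∩ Set.Icc 1 N).ncard : ℝ) ≤ ((L:ℝ)+1)^K * (M:ℝ) := by
    have hc2 : ((Iavg d ∩ Set.Icc 1 N).ncard : ℝ) ≤ (D.card : ℝ) * (M : ℝ) := by
      exact_mod_cast hcount
    have hc3 : (D.card : ℝ) ≤ ((L:ℝ)+1)^K := by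
      have : ((D.card : ℕ) : ℝ) ≤ (((L+1)^K : ℕ) : ℝ) := by exact_mod_cast hDcard
      push_cast at this
      exact this
    have hM0 : (0:ℝ) ≤ (M:ℝ) := by positivity
    nlinarith [hc2, hc3, hM0]
  calc ((Iavg d ∩ Set.Icc 1 N).ncard : ℝ) ≤ ((L:ℝ)+1)^K * (M:ℝ) := hcast
    _ ≤ ((N:ℝ)^δ * (1/(δ * Real.log 2) + 1))^K * (N:ℝ)^ε₂ := by
        apply mul_le_mul _ hMle (by positivity) (by positivity)
        apply pow_le_pow_left₀ (by positivity) hL1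
    _ = (1/(δ * Real.log 2) + 1)^K * (((N:ℝ)^δ)^K * (N:ℝ)^ε₂) := by
        rw [mul_pow]
        ring
    _ ≤ (1/(δ * Real.log 2) + 1)^K * (N:ℝ)^ε := by
        apply mul_le_mul_of_nonneg_left _ (by positivity)
        rw [← Real.rpow_natCast ((N:ℝ)^δ) K, ← Real.rpow_mul (le_of_lt hNRpos),
          ← Real.rpow_add hNRpos]
        apply Real.rpow_le_rpow_of_exponent_le hNR1
        have hδK : δ * (K:ℝ) ≤ ε - ε₂ := by
          rw [hδdef]
          rw [div_mul_eq_mul_div, div_le_iff₀ (by positivity)]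
          have hKle : (K:ℝ) ≤ (K:ℝ) + 1 := by linarith
          nlinarith [hε₂lt]
        linarith
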